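/- A max-plus cone in ℝ_max^n is finitely generated if, and only if, it is the intersection of finitely many half-spaces. -/

import Mathlib

noncomputable section

/-- The max-plus (tropical) semiring `ℝ ∪ {-∞}`:
addition is `max`, multiplication is `+` (with `-∞` absorbing). -/
abbrev Rmax : Type := WithBot ℝ

/-- A max-plus (tropical) cone: a set stable under max-plus linear combinations. -/
def IsTropCone {ι : Type} (V : Set (ι → Rmax)) : Prop :=
  ∀ u ∈ V, ∀ w ∈ V, ∀ lam mu : Rmax, (fun i => max (lam + u i) (mu + w i)) ∈ V

/-- `tropCone X`: the set of all max-plus linear combinations of finitely many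
elements of `X`. -/
def tropCone {ι : Type} (X : Set (ι → Rmax)) : Set (ι → Rmax) :=
  {x | ∃ (m : ℕ) (lam : Fin m → Rmax) (w : Fin m → ι → Rmax),
        (∀ s, w s ∈ X) ∧ x = fun i => Finset.univ.sup (fun s => lam s + w s i)}

/-- `tropCo X`: max-plus convex combinations (coefficients with maximum `0 = 𝟙`)
of finitely many elements of `X`. -/
def tropCo {ι : Type} (X : Set (ι → Rmax)) : Set (ι → Rmax) :=
  {x | ∃ (m : ℕ) (lam : Fin m → Rmax) (w : Fin m → ι → Rmax),
        (∀ s, w s ∈ X) ∧ Finset.univ.sup lam = (0 : Rmax) ∧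
        x = fun i => Finset.univ.sup (fun s => lam s + w s i)}

/-- Max-plus Minkowski sum of two subsets. -/
def tropSum {ι : Type} (A B : Set (ι → Rmax)) : Set (ι → Rmax) :=
  {z | ∃ a ∈ A, ∃ b ∈ B, z = fun i => max (a i) (b i)}

/-- A half-space of `ℝ_max^ι`. -/
def IsHalfSpace {ι : Type} [Fintype ι] (H : Set (ι → Rmax)) : Prop :=
  ∃ a b : ι → Rmax,
    H = {x | Finset.univ.sup (fun i => a i + x i) ≤ Finset.univ.sup (fun j => b j + x j)}

/-- An affine half-space of `ℝ_max^ι`. -/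
def IsAffineHalfSpace {ι : Type} [Fintype ι] (H : Set (ι → Rmax)) : Prop :=
  ∃ (a b : ι → Rmax) (c d : Rmax),
    H = {x | max (Finset.univ.sup (fun i => a i + x i)) c ≤
             max (Finset.univ.sup (fun j => b j + x j)) d}

/-- A max-plus polyhedron: an intersection of finitely many affine half-spaces. -/
def IsPolyhedron {ι : Type} [Fintype ι] (C : Set (ι → Rmax)) : Prop :=
  ∃ (m : ℕ) (H : Fin m → Set (ι → Rmax)),
    (∀ k, IsAffineHalfSpace (H k)) ∧ C = ⋂ k, H k

/-- The recession cone of a max-plus convex set. -/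
def recessionCone {ι : Type} (C : Set (ι → Rmax)) : Set (ι → Rmax) :=
  {u | ∃ x ∈ C, ∀ lam : Rmax, (fun i => max (x i) (lam + u i)) ∈ C}

/-- A half-space minimal (for inclusion) among the half-spaces containing `V`. -/
def IsMinimalHalfSpace {ι : Type} [Fintype ι] (V H : Set (ι → Rmax)) : Prop :=
  IsHalfSpace H ∧ V ⊆ H ∧ ¬ ∃ H', IsHalfSpace H' ∧ V ⊆ H' ∧ H' ⊂ H

/-- The half-space written in normal form: `max_{i ∈ I} (a i + x i) ≤ max_{j ∈ J} (a j + x j)`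
(the sup over an empty index set being `⊥ = -∞`). -/
def halfSpace {ι : Type} (I J : Finset ι) (a : ι → ℝ) : Set (ι → Rmax) :=
  {x | I.sup (fun i => ((a i : Rmax)) + x i) ≤ J.sup (fun j => ((a j : Rmax)) + x j)}

/-- The max-plus cone generated by the vectors `v 0, …, v (p-1)` (finite entries). -/
def genCone {ι : Type} [Fintype ι] {p : ℕ} (v : Fin p → ι → ℝ) : Set (ι → Rmax) :=
  {x | ∃ lam : Fin p → Rmax, x = fun i => Finset.univ.sup (fun r => lam r + ((v r i : Rmax)))}

/-- `S_j(x)`: the `j`-th component of the type of `x` relative to the generators `v`. -/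
def typeSet {ι : Type} {p : ℕ} (v : Fin p → ι → ℝ) (x : ι → ℝ) (j : ι) : Set (Fin p) :=
  {r | v r j - x j = ⨆ k, (v r k - x k)}

/-- `V` has full support. -/
def HasFullSupport {ι : Type} (V : Set (ι → Rmax)) : Prop :=
  ∀ k : ι, ∃ v ∈ V, v k ≠ ⊥

/-- `x` is a vertex of the natural cell decomposition induced by the generators `v`:
the cell of `type(x)` consists exactly of the (finite) scalar multiples of `x`. -/
def IsVertex {ι : Type} {p : ℕ} (v : Fin p → ι → ℝ) (x : ι → ℝ) : Prop :=
  {y : ι → ℝ | ∀ j, typeSet v x j ⊆ typeSet v y j} = {y | ∃ c : ℝ, y = fun i => c + x i}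

/-- The `i`-th max-plus unit vector. -/
def unitVec {ι : Type} [DecidableEq ι] (i : ι) : ι → Rmax :=
  fun k => if k = i then (0 : Rmax) else ⊥

/-- The vector `⊕_{j ∈ J} b j ⊙ e^j`. -/
def jVec {ι : Type} [DecidableEq ι] (J : Finset ι) (b : ι → ℝ) : ι → Rmax :=
  fun k => if k ∈ J then ((b k : Rmax)) else ⊥

/-- The polar of a max-plus cone: the set of (pairs defining) half-spaces containing it. -/
def polar {ι : Type} [Fintype ι] (V : Set (ι → Rmax)) : Set ((ι → Rmax) × (ι → Rmax)) :=
  {q | ∀ x ∈ V, Finset.univ.sup (fun i => q.1 i + x i) ≤ Finset.univ.sup (fun j => q.2 j + x j)}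

/-- Extreme vector of a max-plus cone of pairs (e.g. the polar). -/
def IsExtremePair {ι : Type} (W : Set ((ι → Rmax) × (ι → Rmax)))
    (z : (ι → Rmax) × (ι → Rmax)) : Prop :=
  z ∈ W ∧ z ≠ (fun _ => (⊥ : Rmax), fun _ => (⊥ : Rmax)) ∧
    ∀ u ∈ W, ∀ w ∈ W,
      z = (fun i => max (u.1 i) (w.1 i), fun i => max (u.2 i) (w.2 i)) → z = u ∨ z = w

/-- Extreme point of a max-plus convex set. -/
def IsExtremePoint {ι : Type} (C : Set (ι → Rmax)) (z : ι → Rmax) : Prop :=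
  z ∈ C ∧ ∀ u ∈ C, ∀ w ∈ C, ∀ lam mu : Rmax, max lam mu = (0 : Rmax) →
    z = (fun i => max (lam + u i) (mu + w i)) → z = u ∨ z = w

/-- Extreme vector of a max-plus cone. -/
def IsExtremeVector {ι : Type} (W : Set (ι → Rmax)) (z : ι → Rmax) : Prop :=
  z ∈ W ∧ z ≠ (fun _ => (⊥ : Rmax)) ∧
    ∀ u ∈ W, ∀ w ∈ W, z = (fun i => max (u i) (w i)) → z = u ∨ z = w

/-- Projection of a subset of `ℝ_max^ι` onto the coordinates indexed by `K`. -/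
def projCone {ι : Type} (K : Finset ι) (V : Set (ι → Rmax)) :
    Set ({k : ι // k ∈ K} → Rmax) :=
  {y | ∃ x ∈ V, y = fun k => x k.1}

namespace TropAux
open Finset

lemma add_sup {σ : Type} (s : Finset σ) (f : σ → Rmax) (c : Rmax) :
    c + s.sup f = s.sup fun i => c + f i :=
  Finset.comp_sup_eq_sup_comp (fun t => c + t)
    (fun x y => (max_add_add_left c x y).symm)
    (by simp)

lemma sup_add {σ : Type} (s : Finset σ) (f : σ → Rmax) (c : Rmax) :
    s.sup f + c = s.sup fun i => f i + c := by
  rw [add_comm, add_sup]; simp_rw [add_comm]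

lemma sup_unit {σ : Type} [Fintype σ] [DecidableEq σ] (c : σ) (h : σ → Rmax) :
    (univ : Finset σ).sup (fun r => if r = c then h r else ⊥) = h c := by
  apply le_antisymm
  · refine Finset.sup_le fun r _ => ?_
    split_ifs with hr
    · subst hr; exact le_rfl
    · exact bot_le
  · exact le_trans (by simp) (Finset.le_sup (Finset.mem_univ c))

lemma sup_unit' {σ : Type} [Fintype σ] [DecidableEq σ] (c : σ) (h : σ → Rmax) :
    (univ : Finset σ).sup (fun r => if c = r then h r else ⊥) = h c := by
  rw [← sup_unit c h]; apply Finset.sup_congr rfl; intro r _; simp [eq_comm]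

lemma sup_sum {σ τ : Type} [Fintype σ] [Fintype τ] (f : σ ⊕ τ → Rmax) :
    (univ : Finset (σ ⊕ τ)).sup f =
      max ((univ : Finset σ).sup (fun r => f (Sum.inl r)))
          ((univ : Finset τ).sup (fun r => f (Sum.inr r))) := by
  apply le_antisymm
  · refine Finset.sup_le fun z _ => ?_
    cases z with
    | inl r => exact le_max_of_le_left (Finset.le_sup (f := fun r => f (Sum.inl r)) (Finset.mem_univ r))
    | inr r => exact le_max_of_le_right (Finset.le_sup (f := fun r => f (Sum.inr r)) (Finset.mem_univ r))
  · exact max_le (Finset.sup_le fun r _ => Finset.le_sup (Finset.mem_univ (Sum.inl r)))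
      (Finset.sup_le fun r _ => Finset.le_sup (Finset.mem_univ (Sum.inr r)))

lemma sup_reindex {σ τ : Type} [Fintype σ] [Fintype τ] (e : σ ≃ τ) (f : τ → Rmax) :
    (univ : Finset σ).sup (fun r => f (e r)) = (univ : Finset τ).sup f := by
  apply le_antisymm
  · exact Finset.sup_le fun r _ => Finset.le_sup (Finset.mem_univ (e r))
  · exact Finset.sup_le fun t _ => by
      simpa using Finset.le_sup (f := fun r => f (e r)) (Finset.mem_univ (e.symm t))

/-- tropical scalar product -/
def dot {ι : Type} [Fintype ι] (a x : ι → Rmax) : Rmax :=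
  Finset.univ.sup fun i => a i + x i

/-- half-space -/
def HS {ι : Type} [Fintype ι] (a b : ι → Rmax) : Set (ι → Rmax) :=
  {x | dot a x ≤ dot b x}

/-- span of a finite family -/
def spanI {σ ι : Type} [Fintype σ] [Fintype ι] (w : σ → ι → Rmax) : Set (ι → Rmax) :=
  {x | ∃ lam : σ → Rmax, x = fun i => Finset.univ.sup fun r => lam r + w r i}

lemma mem_spanI_self {σ ι : Type} [Fintype σ] [Fintype ι] (w : σ → ι → Rmax) (r₀ : σ) :
    w r₀ ∈ spanI w := by
  classical
  refine ⟨fun r => if r = r₀ then 0 else ⊥, funext fun i => ?_⟩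
  rw [show (Finset.univ.sup fun r => (if r = r₀ then (0:Rmax) else ⊥) + w r i)
      = Finset.univ.sup fun r => (if r = r₀ then 0 + w r i else ⊥) by
    apply Finset.sup_congr rfl; intro r _; split_ifs <;> simp]
  rw [sup_unit r₀ (fun r => 0 + w r i), zero_add]

lemma dot_span {σ ι : Type} [Fintype σ] [Fintype ι] (a : ι → Rmax) (mu : σ → Rmax)
    (u : σ → ι → Rmax) :
    dot a (fun i => Finset.univ.sup fun k => mu k + u k i)
      = Finset.univ.sup fun k => mu k + dot a (u k) := by
  unfold dot
  simp_rw [add_sup]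
  rw [Finset.sup_comm]
  exact Finset.sup_congr rfl fun k _ => Finset.sup_congr rfl fun i _ => by rw [add_left_comm]

lemma spanI_subset_spanI {σ τ ι : Type} [Fintype σ] [Fintype τ] [Fintype ι]
    (u : σ → ι → Rmax) (w : τ → ι → Rmax) (h : ∀ k, u k ∈ spanI w) :
    spanI u ⊆ spanI w := by
  choose lam hlam using h
  rintro x ⟨mu, rfl⟩
  refine ⟨fun r => Finset.univ.sup fun k => mu k + lam k r, funext fun i => ?_⟩
  simp_rw [sup_add]
  rw [Finset.sup_comm]
  apply Finset.sup_congr rfl; intro k _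
  rw [hlam k]
  show mu k + (Finset.univ.sup fun r => lam k r + w r i) = _
  rw [add_sup]
  exact Finset.sup_congr rfl fun r _ => by rw [add_assoc]

lemma spanI_subset_HS {σ ι : Type} [Fintype σ] [Fintype ι]
    (u : σ → ι → Rmax) (a b : ι → Rmax) (h : ∀ k, u k ∈ HS a b) :
    spanI u ⊆ HS a b := by
  rintro x ⟨mu, rfl⟩
  show dot a _ ≤ dot b _
  rw [dot_span, dot_span]
  exact Finset.sup_mono_fun fun k _ => add_le_add_right (h k) _

end TropAux

namespace TropAux
open Finset

variable {ι : Type} [Fintype ι]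

/-- finitely generated -/
def FG (V : Set (ι → Rmax)) : Prop := ∃ (p : ℕ) (w : Fin p → ι → Rmax), V = spanI w

lemma spanI_reindex {σ τ : Type} [Fintype σ] [Fintype τ] (e : σ ≃ τ) (w : τ → ι → Rmax) :
    spanI (fun r => w (e r)) = spanI w := by
  ext x
  constructor
  · rintro ⟨lam, rfl⟩
    refine ⟨fun t => lam (e.symm t), funext fun i => ?_⟩
    rw [← sup_reindex e (fun t => lam (e.symm t) + w t i)]
    simp
  · rintro ⟨lam, rfl⟩
    refine ⟨fun r => lam (e r), funext fun i => ?_⟩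
    rw [← sup_reindex e (fun t => lam t + w t i)]

lemma fg_of_spanI {σ : Type} [Fintype σ] (w : σ → ι → Rmax) : FG (spanI w) := by
  refine ⟨Fintype.card σ, fun r => w ((Fintype.equivFin σ).symm r), ?_⟩
  rw [spanI_reindex (Fintype.equivFin σ).symm w]

lemma tropCone_range {p : ℕ} (w : Fin p → ι → Rmax) :
    tropCone (Set.range w) = spanI w := by
  classical
  ext x
  constructor
  · rintro ⟨m, lam, ws, hmem, rfl⟩
    choose f hf using hmem
    refine ⟨fun r => Finset.univ.sup fun s => if f s = r then lam s else ⊥, funext fun i => ?_⟩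
    simp_rw [sup_add]
    rw [Finset.sup_comm]
    apply Finset.sup_congr rfl; intro s _
    rw [show (Finset.univ.sup fun r => (if f s = r then lam s else ⊥) + w r i)
        = Finset.univ.sup fun r => (if f s = r then lam s + w r i else ⊥) from
      Finset.sup_congr rfl fun r _ => by split_ifs <;> simp]
    rw [sup_unit' (f s) (fun r => lam s + w r i), hf s]
  · rintro ⟨lam, rfl⟩
    exact ⟨p, lam, w, fun s => ⟨s, rfl⟩, rfl⟩

lemma fg_univ : FG (Set.univ : Set (ι → Rmax)) := by
  classical
  have : (Set.univ : Set (ι → Rmax)) = spanI (fun r i : ι => if i = r then (0:Rmax) else ⊥) := by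
    ext x
    simp only [Set.mem_univ, true_iff]
    refine ⟨x, funext fun i => ?_⟩
    rw [show (Finset.univ.sup fun r => x r + if i = r then (0:Rmax) else ⊥)
        = Finset.univ.sup fun r => (if i = r then x r + 0 else ⊥) from
      Finset.sup_congr rfl fun r _ => by split_ifs <;> simp]
    rw [sup_unit' i (fun r => x r + 0), add_zero]
  rw [this]; exact fg_of_spanI _

end TropAux
namespace TropAux
open Finset

variable {ι : Type} [Fintype ι]

lemma bot_mem_spanI {σ : Type} [Fintype σ] (w : σ → ι → Rmax) :
    (fun _ => (⊥ : Rmax)) ∈ spanI w := by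
  refine ⟨fun _ => ⊥, funext fun i => ?_⟩
  exact (le_antisymm (Finset.sup_le fun r _ => by simp) bot_le).symm

lemma dot_bot (a : ι → Rmax) : dot a (fun _ => ⊥) = ⊥ :=
  le_antisymm (Finset.sup_le fun i _ => by simp) bot_le

lemma dot_combo (a : ι → Rmax) (c d : Rmax) (g h : ι → Rmax) :
    dot a (fun i => max (c + g i) (d + h i)) = max (c + dot a g) (d + dot a h) := by
  unfold dot
  rw [add_sup, add_sup, ← Finset.sup_sup]
  apply Finset.sup_congr rfl; intro i _
  show a i + max (c + g i) (d + h i) = max (c + (a i + g i)) (d + (a i + h i))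
  rw [← max_add_add_left (a i) (c + g i) (d + h i)]
  rw [add_left_comm (a i) c, add_left_comm (a i) d]

lemma combo_mem_spanI {σ : Type} [Fintype σ] [DecidableEq σ] (w : σ → ι → Rmax)
    (r t : σ) (c d : Rmax) :
    (fun i => max (c + w r i) (d + w t i)) ∈ spanI w := by
  refine ⟨fun r' => max (if r' = r then c else ⊥) (if r' = t then d else ⊥),
    funext fun i => ?_⟩
  apply le_antisymm
  · apply max_le
    · refine le_trans ?_ (Finset.le_sup (f := fun r' =>
        (max (if r' = r then c else ⊥) (if r' = t then d else ⊥)) + w r' i)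
        (Finset.mem_univ r))
      simp only [if_pos rfl]
      exact add_le_add_left (le_max_of_le_left (by split_ifs <;> simp)) _
    · refine le_trans ?_ (Finset.le_sup (f := fun r' =>
        (max (if r' = r then c else ⊥) (if r' = t then d else ⊥)) + w r' i)
        (Finset.mem_univ t))
      exact add_le_add_left (le_max_of_le_right (by simp)) _
  · apply Finset.sup_le
    intro r' _
    rw [← max_add_add_right]
    apply max_le
    · split_ifs with hr
      · subst hr; exact le_max_left _ _
      · simp
    · split_ifs with ht
      · subst ht; exact le_max_right _ _
      · simp

/-- the double description step -/
lemma step {σ : Type} [Fintype σ] (w : σ → ι → Rmax) (a b : ι → Rmax) :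
    ∃ u : σ ⊕ σ × σ → ι → Rmax, spanI w ∩ HS a b = spanI u := by
  classical
  set A : σ → Rmax := fun r => dot a (w r) with hA
  set B : σ → Rmax := fun r => dot b (w r) with hB
  refine ⟨Sum.elim (fun r => if A r ≤ B r then w r else fun _ => ⊥)
    (fun rt => if A rt.2 ≤ B rt.2 then
        (fun i => max (B rt.2 + w rt.1 i) (A rt.1 + w rt.2 i)) else fun _ => ⊥), ?_⟩
  set u := Sum.elim (fun r => if A r ≤ B r then w r else fun _ => (⊥:Rmax))
    (fun rt : σ × σ => if A rt.2 ≤ B rt.2 then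
        (fun i => max (B rt.2 + w rt.1 i) (A rt.1 + w rt.2 i)) else fun _ => (⊥:Rmax)) with hu
  apply Set.Subset.antisymm
  · -- completeness
    rintro x ⟨hsp, hx⟩
    simp only [spanI, Set.mem_setOf_eq] at hsp
    obtain ⟨lam, rfl⟩ := hsp
    have hdax : dot a _ = Finset.univ.sup fun r => lam r + A r := dot_span a lam w
    have hdbx : dot b _ = Finset.univ.sup fun r => lam r + B r := dot_span b lam w
    simp only [HS, Set.mem_setOf_eq] at hx
    rw [hdax, hdbx] at hx
    by_cases hb : (Finset.univ.sup fun r => lam r + B r) = ⊥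
    · -- trivial case
      refine ⟨Sum.elim lam (fun _ => ⊥), funext fun i => ?_⟩
      rw [sup_sum]
      have h2 : (Finset.univ.sup fun rt : σ × σ =>
          Sum.elim lam (fun _ => (⊥:Rmax)) (Sum.inr rt) + u (Sum.inr rt) i) = ⊥ :=
        le_antisymm (Finset.sup_le fun rt _ => by simp) bot_le
      rw [h2, max_eq_left bot_le]
      apply Finset.sup_congr rfl; intro r _
      show lam r + w r i = lam r + u (Sum.inl r) i
      by_cases hl : lam r = ⊥
      · simp [hl]
      · have hBr : lam r + B r = ⊥ :=
          le_antisymm (le_trans (Finset.le_sup (f := fun r => lam r + B r) (Finset.mem_univ r)) hb.le) bot_le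
        have hAr : lam r + A r = ⊥ := by
          have := le_trans (Finset.le_sup (f := fun r => lam r + A r) (Finset.mem_univ r))
            (hx.trans hb.le)
          exact le_antisymm this bot_le
        have hB' : B r = ⊥ := by rcases WithBot.add_eq_bot.1 hBr with h | h; exact absurd h hl; exact h
        have hA' : A r = ⊥ := by rcases WithBot.add_eq_bot.1 hAr with h | h; exact absurd h hl; exact h
        have : A r ≤ B r := by rw [hA']; exact bot_le
        simp only [hu, Sum.elim_inl, if_pos this]
    · -- main case
      have hne : (Finset.univ : Finset σ).Nonempty := by
        by_contra h
        rw [Finset.not_nonempty_iff_eq_empty] at h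
        rw [h] at hb; simp at hb
      obtain ⟨s, _, hs⟩ := Finset.exists_mem_eq_sup Finset.univ hne fun r => lam r + B r
      have hlams : lam s ≠ ⊥ := fun h => hb (by rw [hs, h, WithBot.bot_add])
      have hBs : B s ≠ ⊥ := fun h => hb (by rw [hs, h, WithBot.add_bot])
      obtain ⟨bb, hbb⟩ := WithBot.ne_bot_iff_exists.1 hBs
      have hconds : A s ≤ B s := by
        by_contra h
        push_neg at h
        have h1 : lam s + B s < lam s + A s := WithBot.add_lt_add_left hlams h
        have h2 : lam s + A s ≤ Finset.univ.sup fun r => lam r + A r :=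
          Finset.le_sup (f := fun r => lam r + A r) (Finset.mem_univ s)
        rw [← hs] at h1
        exact absurd (h2.trans hx) (not_le.2 h1)
      refine ⟨Sum.elim (fun _ => ⊥)
        (fun rt => if rt.2 = s then lam rt.1 + (↑(-bb) : Rmax) else ⊥), funext fun i => ?_⟩
      rw [sup_sum]
      have h1 : (Finset.univ.sup fun r : σ =>
          Sum.elim (fun _ => (⊥:Rmax))
            (fun rt : σ × σ => if rt.2 = s then lam rt.1 + (↑(-bb) : Rmax) else ⊥)
            (Sum.inl r) + u (Sum.inl r) i) = ⊥ :=
        le_antisymm (Finset.sup_le fun r _ => by simp) bot_le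
      rw [h1, max_eq_right bot_le]
      rw [← Finset.univ_product_univ, Finset.sup_product_left]
      have hinner : ∀ r : σ, (Finset.univ.sup fun t : σ =>
          Sum.elim (fun _ => (⊥:Rmax))
            (fun rt => if rt.2 = s then lam rt.1 + (↑(-bb) : Rmax) else ⊥) ((Sum.inr (r, t)) : σ ⊕ σ × σ)
            + u (Sum.inr (r, t)) i)
          = (lam r + (↑(-bb) : Rmax)) + u (Sum.inr (r, s)) i := by
        intro r
        rw [show (Finset.univ.sup fun t : σ =>
            Sum.elim (fun _ => (⊥:Rmax))
              (fun rt => if rt.2 = s then lam rt.1 + (↑(-bb) : Rmax) else ⊥) ((Sum.inr (r, t)) : σ ⊕ σ × σ)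
              + u (Sum.inr (r, t)) i)
            = Finset.univ.sup fun t : σ =>
              (if t = s then (lam r + (↑(-bb) : Rmax)) + u (Sum.inr (r, t)) i else ⊥) from
          Finset.sup_congr rfl fun t _ => by
            simp only [Sum.elim_inr]
            split_ifs <;> simp]
        exact sup_unit s _
      rw [Finset.sup_congr rfl fun r _ => hinner r]
      have hus : ∀ r, u (Sum.inr (r, s)) = fun i => max (B s + w r i) (A r + w s i) := by
        intro r
        simp only [hu, Sum.elim_inr, if_pos hconds]
      apply le_antisymm
      · apply Finset.sup_le
        intro r _
        refine le_trans ?_ (Finset.le_sup (f := fun r =>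
          (lam r + (↑(-bb) : Rmax)) + u (Sum.inr (r, s)) i) (Finset.mem_univ r))
        show lam r + w r i ≤ (lam r + (↑(-bb) : Rmax)) + u (Sum.inr (r, s)) i
        rw [hus r]
        have e2 : (lam r + (↑(-bb) : Rmax)) + (B s + w r i) = lam r + w r i := by
          rw [← hbb, add_assoc, ← add_assoc ((↑(-bb)) : Rmax) _ _, ← WithBot.coe_add]
          norm_num
        exact (le_of_eq e2.symm).trans (add_le_add_right (le_max_left _ _) _)
      · apply Finset.sup_le
        intro r _
        rw [hus r]
        have e1 : (lam r + (↑(-bb) : Rmax)) + max (B s + w r i) (A r + w s i)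
            = max (lam r + w r i) ((lam r + (↑(-bb) : Rmax)) + (A r + w s i)) := by
          rw [← max_add_add_left]
          congr 1
          rw [← hbb]
          rw [← add_assoc, add_assoc (lam r) _ _, ← WithBot.coe_add]
          norm_num
        rw [e1]
        apply max_le
        · exact Finset.le_sup (f := fun r => lam r + w r i) (Finset.mem_univ r)
        · have key : (lam r + (↑(-bb) : Rmax)) + A r ≤ lam s := by
            have h2 : lam r + A r ≤ lam s + B s := by
              rw [← hs]
              exact le_trans (Finset.le_sup (f := fun r => lam r + A r) (Finset.mem_univ r)) hx
            have h3 : lam r + A r + (↑(-bb) : Rmax) ≤ lam s + B s + (↑(-bb) : Rmax) :=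
              add_le_add_left h2 _
            have h4 : lam s + B s + (↑(-bb) : Rmax) = lam s := by
              rw [← hbb, add_assoc, ← WithBot.coe_add]
              norm_num
            rw [h4] at h3
            calc (lam r + (↑(-bb) : Rmax)) + A r = lam r + A r + (↑(-bb) : Rmax) := by
                  rw [add_right_comm]
              _ ≤ lam s := h3
          calc (lam r + (↑(-bb) : Rmax)) + (A r + w s i)
              = ((lam r + (↑(-bb) : Rmax)) + A r) + w s i := (add_assoc _ _ _).symm
            _ ≤ lam s + w s i := add_le_add_left key _
            _ ≤ _ := Finset.le_sup (f := fun r => lam r + w r i) (Finset.mem_univ s)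
  · -- soundness
    have hspan : ∀ k, u k ∈ spanI w := by
      rintro (r | ⟨r, t⟩)
      · simp only [hu, Sum.elim_inl]
        split_ifs
        · exact mem_spanI_self w r
        · exact bot_mem_spanI w
      · simp only [hu, Sum.elim_inr]
        split_ifs
        · exact combo_mem_spanI w r t _ _
        · exact bot_mem_spanI w
    have hhs : ∀ k, u k ∈ HS a b := by
      rintro (r | ⟨r, t⟩)
      · simp only [hu, Sum.elim_inl]
        split_ifs with h
        · exact h
        · show dot a _ ≤ dot b _
          rw [dot_bot, dot_bot]
      · simp only [hu, Sum.elim_inr]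
        split_ifs with h
        · show dot a _ ≤ dot b _
          rw [dot_combo, dot_combo]
          apply max_le
          · rw [add_comm]
            exact le_max_right _ _
          · exact le_max_of_le_right (add_le_add_right h _)
        · show dot a _ ≤ dot b _
          rw [dot_bot, dot_bot]
    exact fun x hx => ⟨spanI_subset_spanI u w hspan hx, spanI_subset_HS u a b hhs hx⟩

lemma fg_inter_HS {V : Set (ι → Rmax)} (hV : FG V) (a b : ι → Rmax) : FG (V ∩ HS a b) := by
  obtain ⟨p, w, rfl⟩ := hV
  obtain ⟨u, hu⟩ := step w a b
  rw [hu]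
  exact fg_of_spanI u

lemma fg_iInter_HS : ∀ (m : ℕ) (a b : Fin m → ι → Rmax), FG (⋂ k, HS (a k) (b k)) := by
  intro m
  induction m with
  | zero => intro a b; rw [Set.iInter_of_empty]; exact fg_univ
  | succ m ih =>
    intro a b
    have : (⋂ k, HS (a k) (b k)) =
        (⋂ k : Fin m, HS (a k.succ) (b k.succ)) ∩ HS (a 0) (b 0) := by
      ext x
      simp only [Set.mem_iInter, Set.mem_inter_iff, Fin.forall_fin_succ]
      tauto
    rw [this]
    exact fg_inter_HS (ih _ _) _ _

end TropAux
namespace TropAux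
open Finset

variable {ι : Type} [Fintype ι]

lemma separation {σ : Type} [Fintype σ] (w : σ → ι → Rmax) (x : ι → Rmax)
    (hx : x ∉ spanI w) :
    ∃ a b : ι → Rmax, (∀ r, dot a (w r) ≤ dot b (w r)) ∧ dot b x < dot a x := by
  classical
  set cond : σ → Prop := fun r => ∀ i, x i = ⊥ → w r i = ⊥ with hcond
  set F : σ → Finset ι := fun r => Finset.univ.filter (fun i => w r i ≠ ⊥) with hF
  set lam : σ → Rmax := fun r =>
    if h : cond r ∧ (F r).Nonempty then
      ↑((F r).inf' h.2 (fun i => WithBot.unbotD 0 (x i) - WithBot.unbotD 0 (w r i)))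
    else ⊥ with hlam
  set ν : ι → Rmax := fun i => Finset.univ.sup fun r => lam r + w r i with hnu
  have P1 : ∀ r i, lam r + w r i ≤ x i := by
    intro r i
    by_cases h : cond r ∧ (F r).Nonempty
    · by_cases hw : w r i = ⊥
      · rw [hw, WithBot.add_bot]; exact bot_le
      · have hxi : x i ≠ ⊥ := fun hxi => hw (h.1 i hxi)
        obtain ⟨xr, hxr⟩ := WithBot.ne_bot_iff_exists.1 hxi
        obtain ⟨wr, hwr⟩ := WithBot.ne_bot_iff_exists.1 hw
        have hmem : i ∈ F r := by simp [hF, hw]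
        have hle : (F r).inf' h.2 (fun i => WithBot.unbotD 0 (x i) - WithBot.unbotD 0 (w r i))
            ≤ WithBot.unbotD 0 (x i) - WithBot.unbotD 0 (w r i) := Finset.inf'_le _ hmem
        rw [← hxr, ← hwr, WithBot.unbotD_coe, WithBot.unbotD_coe] at hle
        simp only [hlam]
        rw [dif_pos h, ← hxr, ← hwr, ← WithBot.coe_add, WithBot.coe_le_coe]
        linarith
    · simp only [hlam]
      rw [dif_neg h, WithBot.bot_add]; exact bot_le
  have hnux : ∀ i, ν i ≤ x i := fun i => Finset.sup_le fun r _ => P1 r i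
  have hnumem : ν ∈ spanI w := ⟨lam, rfl⟩
  have hne : ν ≠ x := fun h => hx (h ▸ hnumem)
  have hex : ∃ i, ν i < x i := by
    by_contra h
    push_neg at h
    exact hne (funext fun i => le_antisymm (hnux i) (h i))
  obtain ⟨i0, hi0⟩ := hex
  have hxi0 : x i0 ≠ ⊥ := fun h => by rw [h] at hi0; exact not_lt_bot hi0
  set a : ι → Rmax := fun i => if ν i < x i then
      (if ν i = ⊥ then ↑(1 - WithBot.unbotD 0 (x i)) else ↑(-(WithBot.unbotD 0 (ν i))))
    else ⊥ with ha
  obtain ⟨M, hM⟩ := Finset.exists_le ((Finset.univ : Finset σ).image fun r =>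
    WithBot.unbotD 0 (dot a (w r))
      - WithBot.unbotD 0 (Finset.univ.sup fun j => if x j = ⊥ then w r j else ⊥))
  set b : ι → Rmax := fun j => if x j = ⊥ then ↑M else
      (if ν j = x j then ↑(-(WithBot.unbotD 0 (x j))) else ⊥) with hb
  refine ⟨a, b, ?_, ?_⟩
  · intro r
    by_cases hc : cond r
    · by_cases hl : lam r = ⊥
      · -- all w r i = ⊥
        have hall : ∀ i, w r i = ⊥ := by
          intro i
          by_contra hw
          have hmem : (F r).Nonempty := ⟨i, by simp [hF, hw]⟩
          simp only [hlam] at hl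
          rw [dif_pos ⟨hc, hmem⟩] at hl
          exact WithBot.coe_ne_bot hl
        have hd : dot a (w r) = ⊥ :=
          le_antisymm (Finset.sup_le fun i _ => by
            rw [hall i, WithBot.add_bot]) bot_le
        rw [hd]; exact bot_le
      · -- main case
        have hFr : (F r).Nonempty := by
          by_contra hFe
          simp only [hlam] at hl
          rw [dif_neg (fun hh => hFe hh.2)] at hl
          exact hl rfl
        have hpos : cond r ∧ (F r).Nonempty := ⟨hc, hFr⟩
        set lr : ℝ := (F r).inf' hFr
          (fun i => WithBot.unbotD 0 (x i) - WithBot.unbotD 0 (w r i)) with hlr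
        have hlamr : lam r = ↑lr := by simp only [hlam]; rw [dif_pos hpos]
        obtain ⟨i1, hi1mem, hinf⟩ := Finset.exists_mem_eq_inf' hFr
          (fun i => WithBot.unbotD 0 (x i) - WithBot.unbotD 0 (w r i))
        have hw1 : w r i1 ≠ ⊥ := by
          have h2 := hi1mem; simp only [hF, Finset.mem_filter] at h2; exact h2.2
        have hx1 : x i1 ≠ ⊥ := fun hxi => hw1 (hc i1 hxi)
        obtain ⟨xr1, hxr1⟩ := WithBot.ne_bot_iff_exists.1 hx1
        obtain ⟨wr1, hwr1⟩ := WithBot.ne_bot_iff_exists.1 hw1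
        have hlr1 : lr = xr1 - wr1 := by
          rw [hlr, hinf, ← hxr1, ← hwr1, WithBot.unbotD_coe, WithBot.unbotD_coe]
        have heq1 : lam r + w r i1 = x i1 := by
          rw [hlamr, ← hwr1, ← hxr1, ← WithBot.coe_add, WithBot.coe_eq_coe, hlr1]
          ring
        have hnu1 : ν i1 = x i1 := by
          refine le_antisymm (hnux i1) ?_
          rw [← heq1]
          exact Finset.le_sup (f := fun r => lam r + w r i1) (Finset.mem_univ r)
        have hb1 : b i1 = ↑(-xr1) := by
          simp only [hb]
          rw [if_neg hx1, if_pos hnu1, ← hxr1, WithBot.unbotD_coe]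
        have hrhs : (↑(-lr) : Rmax) ≤ dot b (w r) := by
          have h3 : b i1 + w r i1 = ↑(-lr) := by
            rw [hb1, ← hwr1, ← WithBot.coe_add, WithBot.coe_eq_coe, hlr1]; ring
          rw [← h3]
          exact Finset.le_sup (f := fun i => b i + w r i) (Finset.mem_univ i1)
        refine le_trans ?_ hrhs
        apply Finset.sup_le
        intro i _
        by_cases hvi : ν i < x i
        · by_cases hw : w r i = ⊥
          · rw [hw, WithBot.add_bot]; exact bot_le
          · obtain ⟨wri, hwri⟩ := WithBot.ne_bot_iff_exists.1 hw
            have hnui : (↑(lr + wri) : Rmax) ≤ ν i := by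
              have h4 : lam r + w r i = ↑(lr + wri) := by
                rw [hlamr, ← hwri, ← WithBot.coe_add]
              rw [← h4]
              exact Finset.le_sup (f := fun r => lam r + w r i) (Finset.mem_univ r)
            have hnb : ν i ≠ ⊥ := fun h => by
              rw [h] at hnui
              exact WithBot.coe_ne_bot (le_bot_iff.1 hnui)
            obtain ⟨nri, hnri⟩ := WithBot.ne_bot_iff_exists.1 hnb
            have hnle : lr + wri ≤ nri := by
              rw [← hnri, WithBot.coe_le_coe] at hnui; exact hnui
            have hai : a i = ↑(-nri) := by
              simp only [ha]
              rw [if_pos hvi, if_neg hnb, ← hnri, WithBot.unbotD_coe]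
            rw [hai, ← hwri, ← WithBot.coe_add, WithBot.coe_le_coe]
            linarith
        · have hai : a i = ⊥ := by simp only [ha]; rw [if_neg hvi]
          rw [hai, WithBot.bot_add]; exact bot_le
    · -- r not in G0 : use the M bound
      simp only [hcond] at hc
      push_neg at hc
      obtain ⟨j0, hxj0, hwj0⟩ := hc
      set Sr : Rmax := Finset.univ.sup fun j => if x j = ⊥ then w r j else ⊥ with hSr
      have hSrne : Sr ≠ ⊥ := by
        intro h
        have h1 : w r j0 ≤ Sr := by
          have h2 : (if x j0 = ⊥ then w r j0 else ⊥) = w r j0 := if_pos hxj0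
          rw [hSr, ← h2]
          exact Finset.le_sup (f := fun j => if x j = ⊥ then w r j else ⊥) (Finset.mem_univ j0)
        rw [h] at h1
        exact hwj0 (le_bot_iff.1 h1)
      obtain ⟨sr, hsr⟩ := WithBot.ne_bot_iff_exists.1 hSrne
      have hMr : WithBot.unbotD 0 (dot a (w r)) - WithBot.unbotD 0 Sr ≤ M :=
        hM _ (Finset.mem_image_of_mem _ (Finset.mem_univ r))
      have hstep1 : (↑M : Rmax) + Sr ≤ dot b (w r) := by
        have h5 : (↑M : Rmax) + Sr = Finset.univ.sup fun j =>
            (if x j = ⊥ then (↑M : Rmax) + w r j else ⊥) := by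
          rw [hSr, add_sup]
          apply Finset.sup_congr rfl; intro j _
          split_ifs <;> simp
        rw [h5]
        apply Finset.sup_le
        intro j _
        split_ifs with hj
        · have h6 : b j = ↑M := by simp only [hb]; rw [if_pos hj]
          rw [← h6]
          exact Finset.le_sup (f := fun j => b j + w r j) (Finset.mem_univ j)
        · exact bot_le
      refine le_trans ?_ hstep1
      by_cases hd : dot a (w r) = ⊥
      · rw [hd]; exact bot_le
      · obtain ⟨dr, hdr⟩ := WithBot.ne_bot_iff_exists.1 hd
        rw [← hdr, ← hsr, ← WithBot.coe_add, WithBot.coe_le_coe]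
        rw [← hdr, ← hsr, WithBot.unbotD_coe, WithBot.unbotD_coe] at hMr
        linarith
  · -- strict violation at x
    have hbx : dot b x ≤ 0 := by
      apply Finset.sup_le
      intro j _
      by_cases hj : x j = ⊥
      · simp [hb, hj]
      · by_cases hv : ν j = x j
        · obtain ⟨xr, hxr⟩ := WithBot.ne_bot_iff_exists.1 hj
          have h7 : b j = ↑(-xr) := by
            simp only [hb]
            rw [if_neg hj, if_pos hv, ← hxr, WithBot.unbotD_coe]
          rw [h7, ← hxr, ← WithBot.coe_add]
          norm_num
        · have h8 : b j = ⊥ := by simp only [hb]; rw [if_neg hj, if_neg hv]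
          rw [h8, WithBot.bot_add]; exact bot_le
    have hax : (0 : Rmax) < dot a x := by
      obtain ⟨xr0, hxr0⟩ := WithBot.ne_bot_iff_exists.1 hxi0
      have hstep : (0 : Rmax) < a i0 + x i0 := by
        by_cases hvb : ν i0 = ⊥
        · have h9 : a i0 = ↑(1 - xr0) := by
            simp only [ha]
            rw [if_pos hi0, if_pos hvb, ← hxr0, WithBot.unbotD_coe]
          rw [h9, ← hxr0, ← WithBot.coe_add]
          rw [show (0 : Rmax) = ((0:ℝ) : Rmax) from rfl, WithBot.coe_lt_coe]
          norm_num
        · obtain ⟨nr0, hnr0⟩ := WithBot.ne_bot_iff_exists.1 hvb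
          have hlt : nr0 < xr0 := by
            rw [← hnr0, ← hxr0, WithBot.coe_lt_coe] at hi0; exact hi0
          have h10 : a i0 = ↑(-nr0) := by
            simp only [ha]
            rw [if_pos hi0, if_neg hvb, ← hnr0, WithBot.unbotD_coe]
          rw [h10, ← hxr0, ← WithBot.coe_add]
          rw [show (0 : Rmax) = ((0:ℝ) : Rmax) from rfl, WithBot.coe_lt_coe]
          linarith
      exact lt_of_lt_of_le hstep
        (Finset.le_sup (f := fun i => a i + x i) (Finset.mem_univ i0))
    exact lt_of_le_of_lt hbx hax

end TropAux
namespace TropAux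
open Finset

variable {ι : Type} [Fintype ι]

lemma dot_comm (a x : ι → Rmax) : dot a x = dot x a :=
  Finset.sup_congr rfl fun i _ => add_comm _ _

lemma fg_to_halfspaces {p : ℕ} (w : Fin p → ι → Rmax) :
    ∃ (m : ℕ) (A B : Fin m → ι → Rmax), spanI w = ⋂ k, HS (A k) (B k) := by
  classical
  set c : Fin p → (ι ⊕ ι) → Rmax := fun r => Sum.elim (fun i => w r i) (fun _ => ⊥) with hc
  set d : Fin p → (ι ⊕ ι) → Rmax := fun r => Sum.elim (fun _ => ⊥) (fun j => w r j) with hd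
  have hdotc : ∀ (r : Fin p) (z : (ι ⊕ ι) → Rmax), dot (c r) z = dot (fun i => z (Sum.inl i)) (w r) := by
    intro r z
    unfold dot
    rw [sup_sum]
    have h2 : (Finset.univ.sup fun j : ι => c r (Sum.inr j) + z (Sum.inr j)) = ⊥ :=
      le_antisymm (Finset.sup_le fun j _ => by simp [hc]) bot_le
    rw [h2, max_eq_left bot_le]
    exact Finset.sup_congr rfl fun i _ => by simp [hc, add_comm]
  have hdotd : ∀ (r : Fin p) (z : (ι ⊕ ι) → Rmax), dot (d r) z = dot (fun j => z (Sum.inr j)) (w r) := by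
    intro r z
    unfold dot
    rw [sup_sum]
    have h2 : (Finset.univ.sup fun i : ι => d r (Sum.inl i) + z (Sum.inl i)) = ⊥ :=
      le_antisymm (Finset.sup_le fun i _ => by simp [hd]) bot_le
    rw [h2, max_eq_right bot_le]
    exact Finset.sup_congr rfl fun j _ => by simp [hd, add_comm]
  obtain ⟨N, q, hq⟩ := fg_iInter_HS p c d
  refine ⟨N, fun k i => q k (Sum.inl i), fun k j => q k (Sum.inr j), ?_⟩
  apply Set.Subset.antisymm
  · -- spanI w ⊆ ⋂ halfspaces
    rw [Set.subset_iInter_iff]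
    intro k
    apply spanI_subset_HS
    intro r
    have hqk : q k ∈ ⋂ r : Fin p, HS (c r) (d r) := by rw [hq]; exact mem_spanI_self q k
    have := Set.mem_iInter.1 hqk r
    simp only [HS, Set.mem_setOf_eq] at this ⊢
    rw [hdotc, hdotd] at this
    exact this
  · -- ⋂ halfspaces ⊆ spanI w
    intro x hxmem
    by_contra hxn
    obtain ⟨a, b, hab, hstrict⟩ := separation w x hxn
    have hzW : Sum.elim a b ∈ ⋂ r : Fin p, HS (c r) (d r) := by
      rw [Set.mem_iInter]
      intro r
      simp only [HS, Set.mem_setOf_eq]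
      rw [hdotc, hdotd]
      exact hab r
    rw [hq] at hzW
    obtain ⟨mu, hmu⟩ := hzW
    have hax : dot a x = Finset.univ.sup fun k => mu k + dot (fun i => q k (Sum.inl i)) x := by
      rw [dot_comm a x]
      have ha : a = fun i => Finset.univ.sup fun k => mu k + q k (Sum.inl i) :=
        funext fun i => congrFun hmu (Sum.inl i)
      calc dot x a = dot x (fun i => Finset.univ.sup fun k => mu k + q k (Sum.inl i)) := by
            rw [← ha]
        _ = Finset.univ.sup fun k => mu k + dot x (fun i => q k (Sum.inl i)) :=
            dot_span x mu (fun k i => q k (Sum.inl i))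
        _ = _ := Finset.sup_congr rfl fun k _ => by rw [dot_comm]
    have hbx : dot b x = Finset.univ.sup fun k => mu k + dot (fun j => q k (Sum.inr j)) x := by
      rw [dot_comm b x]
      have hbq : b = fun j => Finset.univ.sup fun k => mu k + q k (Sum.inr j) :=
        funext fun j => congrFun hmu (Sum.inr j)
      calc dot x b = dot x (fun j => Finset.univ.sup fun k => mu k + q k (Sum.inr j)) := by
            rw [← hbq]
        _ = Finset.univ.sup fun k => mu k + dot x (fun j => q k (Sum.inr j)) :=
            dot_span x mu (fun k j => q k (Sum.inr j))
        _ = _ := Finset.sup_congr rfl fun k _ => by rw [dot_comm]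
    have hle : dot a x ≤ dot b x := by
      rw [hax, hbx]
      apply Finset.sup_mono_fun
      intro k _
      apply add_le_add_right
      exact Set.mem_iInter.1 hxmem k
    exact absurd hle (not_le.2 hstrict)

end TropAux

open TropAux in
theorem stmt_0' {n : ℕ} (V : Set (Fin n → Rmax)) :
    (∃ X : Set (Fin n → Rmax), X.Finite ∧ V = tropCone X) ↔
      (∃ (m : ℕ) (H : Fin m → Set (Fin n → Rmax)),
        (∀ k, IsHalfSpace (H k)) ∧ V = ⋂ k, H k) := by
  constructor
  · rintro ⟨X, hfin, rfl⟩
    obtain ⟨p, w, hXw⟩ : ∃ (p : ℕ) (w : Fin p → (Fin n → Rmax)), X = Set.range w := by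
      obtain ⟨s, hs⟩ := hfin.exists_finset_coe
      refine ⟨s.card, fun r => (s.equivFin.symm r : _), ?_⟩
      rw [← hs]
      ext y
      constructor
      · intro hy
        exact ⟨s.equivFin ⟨y, hy⟩, by simp⟩
      · rintro ⟨r, rfl⟩
        exact (s.equivFin.symm r).2
    rw [hXw, tropCone_range]
    obtain ⟨m, A, B, hAB⟩ := fg_to_halfspaces w
    exact ⟨m, fun k => HS (A k) (B k), fun k => ⟨A k, B k, rfl⟩, hAB⟩
  · rintro ⟨m, H, hH, rfl⟩
    choose A B hAB using hH
    have hHeq : H = fun k => HS (A k) (B k) := funext fun k => (hAB k).trans rfl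
    rw [hHeq]
    obtain ⟨p, w, hw⟩ := fg_iInter_HS m A B
    exact ⟨Set.range w, Set.finite_range w, by rw [hw, tropCone_range]⟩

/-- a max-plus cone is finitely generated if, and only if, it is
the intersection of finitely many half-spaces. -/
theorem stmt_0 {n : ℕ} (V : Set (Fin n → Rmax)) (hV : IsTropCone V) :
    (∃ X : Set (Fin n → Rmax), X.Finite ∧ V = tropCone X) ↔
      (∃ (m : ℕ) (H : Fin m → Set (Fin n → Rmax)),
        (∀ k, IsHalfSpace (H k)) ∧ V = ⋂ k, H k) := by
  exact stmt_0' V
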